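/- (Comparison function lemma) Under the hypotheses of Lemma 2.1, there exists v : closure(B_R(0) \ B_{R−ε}(0)) → [0,m] such that: (i) v = 0 on ∂B_R(0), v = m on ∂B_{R−ε}(0), and v > 0 on the open annulus; (ii) v ∈ C¹ up to the closure and C² in the interior; (iii) L[v] > 0 on the open annulus; (iv) the outward normal derivative of v on ∂B_R(0) equals −m/f(ε) < 0. -/

import Mathlib

open Set Metric MeasureTheory

/-- `pd i u` is the `i`-th partial derivative of `u`. -/
noncomputable def pd {n : ℕ} (i : Fin n) (u : EuclideanSpace ℝ (Fin n) → ℝ) :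
    EuclideanSpace ℝ (Fin n) → ℝ :=
  fun x => fderiv ℝ u x (EuclideanSpace.single i 1)

noncomputable def Lam0 (ε : ℝ) (Λ : ℝ → ℝ) : ℝ → ℝ := (Set.Ioc 0 ε).indicator Λ

noncomputable def FF (ε : ℝ) (Λ : ℝ → ℝ) (s : ℝ) : ℝ := ∫ t in (0:ℝ)..s, Lam0 ε Λ t

noncomputable def ff (ε k : ℝ) (Λ : ℝ → ℝ) (r : ℝ) : ℝ :=
  r + k * ∫ s in (0:ℝ)..r, FF ε Λ s

variable {ε k : ℝ} {Λ : ℝ → ℝ}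

lemma Lam0_int (hΛint : IntegrableOn Λ (Set.Ioc 0 ε)) : Integrable (Lam0 ε Λ) :=
  hΛint.integrable_indicator measurableSet_Ioc

lemma Lam0_nonneg (hΛpos : ∀ d ∈ Set.Ioc (0 : ℝ) ε, 0 < Λ d) (t : ℝ) : 0 ≤ Lam0 ε Λ t :=
  Set.indicator_nonneg (fun s hs => (hΛpos s hs).le) t

lemma FF_cont (hΛint : IntegrableOn Λ (Set.Ioc 0 ε)) : Continuous (FF ε Λ) :=
  intervalIntegral.continuous_primitive (fun a b => (Lam0_int hΛint).intervalIntegrable) 0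

lemma FF_eq (hε : 0 < ε) {s : ℝ} (h0 : 0 ≤ s) (hs : s ≤ ε) :
    FF ε Λ s = ∫ t in Set.Ioc (0:ℝ) s, Λ t := by
  rw [FF, intervalIntegral.integral_of_le h0]
  refine setIntegral_congr_fun measurableSet_Ioc (fun t ht => ?_)
  exact Set.indicator_of_mem (show t ∈ Set.Ioc 0 ε from ⟨ht.1, ht.2.trans hs⟩) Λ

lemma FF_nonneg (hΛpos : ∀ d ∈ Set.Ioc (0 : ℝ) ε, 0 < Λ d)
    (hΛint : IntegrableOn Λ (Set.Ioc 0 ε)) (s : ℝ) : 0 ≤ FF ε Λ s := by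
  rcases le_or_gt s 0 with h | h
  · rw [FF, intervalIntegral.integral_of_ge h]
    rw [neg_nonneg]
    have : ∀ t ∈ Set.Ioc s (0:ℝ), Lam0 ε Λ t = 0 := by
      intro t ht
      exact Set.indicator_of_notMem (fun hm : t ∈ Set.Ioc 0 ε => absurd (hm.1.trans_le ht.2) (lt_irrefl 0)) Λ
    rw [setIntegral_congr_fun measurableSet_Ioc this]
    simp
  · rw [FF, intervalIntegral.integral_of_le h.le]
    exact setIntegral_nonneg measurableSet_Ioc (fun t _ => Lam0_nonneg hΛpos t)

lemma FF_mono (hΛpos : ∀ d ∈ Set.Ioc (0 : ℝ) ε, 0 < Λ d)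
    (hΛint : IntegrableOn Λ (Set.Ioc 0 ε)) {s t : ℝ} (hst : s ≤ t) :
    FF ε Λ s ≤ FF ε Λ t := by
  have h := intervalIntegral.integral_add_adjacent_intervals
    (a := (0:ℝ)) (b := s) (c := t)
    ((Lam0_int hΛint).intervalIntegrable) ((Lam0_int hΛint).intervalIntegrable)
  have h2 : 0 ≤ ∫ u in s..t, Lam0 ε Λ u :=
    intervalIntegral.integral_nonneg hst (fun u _ => Lam0_nonneg hΛpos u)
  rw [FF, FF, ← h]
  linarith

lemma FF_le (hε : 0 < ε) (hΛpos : ∀ d ∈ Set.Ioc (0 : ℝ) ε, 0 < Λ d)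
    (hΛint : IntegrableOn Λ (Set.Ioc 0 ε)) (s : ℝ) :
    FF ε Λ s ≤ ∫ t in Set.Ioc (0:ℝ) ε, Λ t := by
  rcases le_or_gt s ε with h | h
  · rw [← FF_eq hε hε.le le_rfl]
    exact FF_mono hΛpos hΛint h
  · -- FF s = FF ε for s ≥ ε
    have h1 := intervalIntegral.integral_add_adjacent_intervals
      (a := (0:ℝ)) (b := ε) (c := s)
      ((Lam0_int hΛint).intervalIntegrable) ((Lam0_int hΛint).intervalIntegrable)
    have h2 : (∫ u in ε..s, Lam0 ε Λ u) = 0 := by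
      rw [intervalIntegral.integral_of_le h.le]
      have : ∀ t ∈ Set.Ioc ε s, Lam0 ε Λ t = 0 := fun t ht =>
        Set.indicator_of_notMem (fun hm : t ∈ Set.Ioc 0 ε => absurd hm.2 (not_le.2 ht.1)) Λ
      rw [setIntegral_congr_fun measurableSet_Ioc this]
      simp
    have : FF ε Λ s = FF ε Λ ε := by rw [FF, FF, ← h1, h2, add_zero]
    rw [this, ← FF_eq hε hε.le le_rfl]

lemma FF_hasDeriv (hε : 0 < ε) (hΛcont : ContinuousOn Λ (Set.Ioc 0 ε))
    (hΛint : IntegrableOn Λ (Set.Ioc 0 ε)) {r : ℝ} (hr : r ∈ Set.Ioo 0 ε) :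
    HasDerivAt (FF ε Λ) (Λ r) r := by
  have hmem : Set.Ioo (0:ℝ) ε ∈ nhds r := (isOpen_Ioo).mem_nhds hr
  have hcongr : ∀ᶠ t in nhds r, Λ t = Lam0 ε Λ t := by
    filter_upwards [hmem] with t ht
    exact (Set.indicator_of_mem (show t ∈ Set.Ioc 0 ε from ⟨ht.1, ht.2.le⟩) Λ).symm
  have hca : ContinuousAt (Lam0 ε Λ) r := by
    have hΛat : ContinuousAt Λ r :=
      (hΛcont r ⟨hr.1, hr.2.le⟩).continuousAt (Filter.mem_of_superset hmem Set.Ioo_subset_Ioc_self)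
    exact hΛat.congr hcongr
  have := intervalIntegral.integral_hasDerivAt_right
    (f := Lam0 ε Λ) (a := (0:ℝ)) (b := r)
    ((Lam0_int hΛint).intervalIntegrable)
    ((Lam0_int hΛint).aestronglyMeasurable.stronglyMeasurableAtFilter)
    hca
  have hval : Lam0 ε Λ r = Λ r := Set.indicator_of_mem (show r ∈ Set.Ioc 0 ε from ⟨hr.1, hr.2.le⟩) Λ
  rw [hval] at this
  exact this

lemma ff_hasDeriv (hΛint : IntegrableOn Λ (Set.Ioc 0 ε)) (r : ℝ) :
    HasDerivAt (ff ε k Λ) (1 + k * FF ε Λ r) r := by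
  have h1 : HasDerivAt (fun u => ∫ s in (0:ℝ)..u, FF ε Λ s) (FF ε Λ r) r :=
    intervalIntegral.integral_hasDerivAt_right
      ((FF_cont hΛint).intervalIntegrable _ _)
      ((FF_cont hΛint).aestronglyMeasurable.stronglyMeasurableAtFilter)
      (FF_cont hΛint).continuousAt
  exact (hasDerivAt_id r).add ((h1.const_mul k))

lemma ff_zero : ff ε k Λ 0 = 0 := by simp [ff]

lemma ff_mono (hΛpos : ∀ d ∈ Set.Ioc (0 : ℝ) ε, 0 < Λ d)
    (hΛint : IntegrableOn Λ (Set.Ioc 0 ε)) (hk : 0 < k) {s t : ℝ} (hst : s ≤ t) :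
    ff ε k Λ s ≤ ff ε k Λ t := by
  have h := intervalIntegral.integral_add_adjacent_intervals (μ := volume) (a := (0:ℝ)) (b := s) (c := t)
    ((FF_cont hΛint).intervalIntegrable _ _) ((FF_cont hΛint).intervalIntegrable _ _)
  have h2 : 0 ≤ ∫ u in s..t, FF ε Λ u :=
    intervalIntegral.integral_nonneg hst (fun u _ => FF_nonneg hΛpos hΛint u)
  rw [ff, ff, ← h]
  nlinarith

lemma ff_ge (hΛpos : ∀ d ∈ Set.Ioc (0 : ℝ) ε, 0 < Λ d)
    (hΛint : IntegrableOn Λ (Set.Ioc 0 ε)) (hk : 0 < k) {r : ℝ} (h0 : 0 ≤ r) :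
    r ≤ ff ε k Λ r := by
  have h2 : 0 ≤ ∫ u in (0:ℝ)..r, FF ε Λ u :=
    intervalIntegral.integral_nonneg h0 (fun u _ => FF_nonneg hΛpos hΛint u)
  rw [ff]; nlinarith

lemma ff_le_two (hε : 0 < ε) (hΛpos : ∀ d ∈ Set.Ioc (0 : ℝ) ε, 0 < Λ d)
    (hΛint : IntegrableOn Λ (Set.Ioc 0 ε)) (hk : 0 < k)
    (hsmall : (∫ s in Set.Ioc (0 : ℝ) ε, Λ s) < 1 / k) {r : ℝ} (h0 : 0 ≤ r) :
    ff ε k Λ r ≤ 2 * r := by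
  set I := ∫ s in Set.Ioc (0 : ℝ) ε, Λ s with hI
  have hIle : ∀ s ∈ Set.Icc (0:ℝ) r, FF ε Λ s ≤ I := fun s _ => FF_le hε hΛpos hΛint s
  have h1 : (∫ s in (0:ℝ)..r, FF ε Λ s) ≤ (r - 0) * I := by
    have := intervalIntegral.integral_mono_on (μ := volume) (f := FF ε Λ) (g := fun _ => I)
      h0 ((FF_cont hΛint).intervalIntegrable 0 r) intervalIntegrable_const hIle
    simpa using this
  have hkI : k * I ≤ 1 := by
    have := (lt_div_iff₀ hk).mp hsmall
    nlinarith
  rw [ff]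
  nlinarith [mul_le_mul_of_nonneg_left h1 hk.le]

lemma ff_contDiff_one (hΛint : IntegrableOn Λ (Set.Ioc 0 ε)) :
    ContDiff ℝ 1 (ff ε k Λ) := by
  rw [contDiff_one_iff_deriv]
  constructor
  · exact fun r => (ff_hasDeriv hΛint r).differentiableAt
  · have : deriv (ff ε k Λ) = fun r => 1 + k * FF ε Λ r :=
      funext fun r => (ff_hasDeriv hΛint r).deriv
    rw [this]
    exact continuous_const.add (continuous_const.mul (FF_cont hΛint))

lemma ff_contDiffOn_two (hε : 0 < ε) (hΛcont : ContinuousOn Λ (Set.Ioc 0 ε))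
    (hΛint : IntegrableOn Λ (Set.Ioc 0 ε)) :
    ContDiffOn ℝ 2 (ff ε k Λ) (Set.Ioo 0 ε) := by
  rw [show (2 : WithTop ℕ∞) = (1:WithTop ℕ∞) + 1 from by norm_num,
    contDiffOn_succ_iff_deriv_of_isOpen isOpen_Ioo]
  refine ⟨fun r _ => (ff_hasDeriv hΛint r).differentiableAt.differentiableWithinAt, by simp, ?_⟩
  have hd : deriv (ff ε k Λ) = fun r => 1 + k * FF ε Λ r :=
    funext fun r => (ff_hasDeriv hΛint r).deriv
  rw [hd, show ((1:WithTop ℕ∞)) = (0:WithTop ℕ∞) + 1 by norm_num,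
    contDiffOn_succ_iff_deriv_of_isOpen isOpen_Ioo]
  refine ⟨fun r hr => (((FF_hasDeriv hε hΛcont hΛint hr).const_mul k).const_add
      1).differentiableAt.differentiableWithinAt, by simp, ?_⟩
  rw [contDiffOn_zero]
  have : ∀ r ∈ Set.Ioo (0:ℝ) ε, deriv (fun r => 1 + k * FF ε Λ r) r = k * Λ r := fun r hr =>
    (((FF_hasDeriv hε hΛcont hΛint hr).const_mul k).const_add 1).deriv
  exact ContinuousOn.congr (ContinuousOn.mul continuousOn_const
    (hΛcont.mono Set.Ioo_subset_Ioc_self)) this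

lemma FF_zero : FF ε Λ 0 = 0 := by simp [FF]

lemma myHasFDerivAt_norm {E : Type*} [NormedAddCommGroup E] [InnerProductSpace ℝ E]
    {x : E} (hx : x ≠ 0) :
    HasFDerivAt (fun y : E => ‖y‖) (‖x‖⁻¹ • (innerSL ℝ x : E →L[ℝ] ℝ)) x := by
  have h1 : HasFDerivAt (fun y : E => ‖y‖ ^ 2) (2 • (innerSL ℝ x)) x :=
    (hasStrictFDerivAt_norm_sq x).hasFDerivAt
  have hnx : (0:ℝ) < ‖x‖ := norm_pos_iff.2 hx
  have h2 : HasDerivAt Real.sqrt (1 / (2 * Real.sqrt (‖x‖ ^ 2))) (‖x‖ ^ 2) :=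
    Real.hasDerivAt_sqrt (by positivity)
  have h3 := h2.comp_hasFDerivAt x h1
  rw [show Real.sqrt ∘ (fun y : E => ‖y‖ ^ 2) = fun y : E => ‖y‖ from by
    ext y; simp [Function.comp, Real.sqrt_sq (norm_nonneg y)]] at h3
  refine h3.congr_fderiv ?_
  ext y
  rw [Real.sqrt_sq (norm_nonneg x)]
  simp only [ContinuousLinearMap.smul_apply, smul_eq_mul, nsmul_eq_mul, Nat.cast_ofNat]
  field_simp

lemma abs_coord_le_norm {n : ℕ} (x : EuclideanSpace ℝ (Fin n)) (i : Fin n) : |x i| ≤ ‖x‖ := by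
  have h1 : (x i)^2 ≤ ∑ p, (x p)^2 := Finset.single_le_sum (f := fun p => (x p)^2)
    (fun p _ => sq_nonneg _) (Finset.mem_univ i)
  calc |x i| = Real.sqrt ((x i)^2) := (Real.sqrt_sq_eq_abs _).symm
  _ ≤ Real.sqrt (∑ p, (x p)^2) := Real.sqrt_le_sqrt h1
  _ = ‖x‖ := by
      rw [EuclideanSpace.norm_eq x]
      congr 1
      refine Finset.sum_congr rfl fun p _ => ?_
      rw [Real.norm_eq_abs, sq_abs]

set_option maxHeartbeats 1000000 in
theorem stmt7 (n : ℕ) (hn : 1 ≤ n) (R m ε : ℝ) (hR : 0 < R) (hm : 0 < m)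
    (hε : 0 < ε) (hε' : ε < min 1 (R / 2))
    (k : ℝ) (hk : k = 2 * n * (2 / R + 1) + 3)
    (Λ : ℝ → ℝ)
    (hΛcont : ContinuousOn Λ (Set.Ioc 0 ε))
    (hΛmono : AntitoneOn Λ (Set.Ioc 0 ε))
    (hΛpos : ∀ d ∈ Set.Ioc (0 : ℝ) ε, 0 < Λ d)
    (hΛint : IntegrableOn Λ (Set.Ioc 0 ε))
    (hΛsmall : (∫ s in Set.Ioc (0 : ℝ) ε, Λ s) < 1 / k)
    (Ω : Set (EuclideanSpace ℝ (Fin n)))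
    (hΩ : Ω = Metric.ball (0 : EuclideanSpace ℝ (Fin n)) R \
      closure (Metric.ball (0 : EuclideanSpace ℝ (Fin n)) (R - ε)))
    (a : Fin n → Fin n → EuclideanSpace ℝ (Fin n) → ℝ)
    (b : Fin n → EuclideanSpace ℝ (Fin n) → ℝ)
    (c : EuclideanSpace ℝ (Fin n) → ℝ)
    (hell : ∀ x ∈ Ω, ∀ y : EuclideanSpace ℝ (Fin n),
      ‖y‖ ^ 2 ≤ ∑ i, ∑ j, a i j x * y i * y j ∧
      ∑ i, ∑ j, a i j x * y i * y j ≤ Λ (R - ‖x‖) * ‖y‖ ^ 2)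
    (hb : ∀ x ∈ Ω, ∀ i : Fin n, |b i x| ≤ Λ (R - ‖x‖))
    (hc : ∀ x ∈ Ω, -c x ≤ Λ (R - ‖x‖) / (R - ‖x‖))
    (f : ℝ → ℝ)
    (hf : ∀ r, f r = r + k * ∫ s in Set.Ioc (0 : ℝ) r, ∫ t in Set.Ioc (0 : ℝ) s, Λ t) :
    ∃ v : EuclideanSpace ℝ (Fin n) → ℝ,
      -- v takes values in [0,m]
      (∀ x ∈ closure Ω, 0 ≤ v x ∧ v x ≤ m) ∧
      -- (i) boundary values and positivity
      (∀ x : EuclideanSpace ℝ (Fin n), ‖x‖ = R → v x = 0) ∧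
      (∀ x : EuclideanSpace ℝ (Fin n), ‖x‖ = R - ε → v x = m) ∧
      (∀ x ∈ Ω, 0 < v x) ∧
      -- (ii) regularity
      ContDiffOn ℝ 1 v (closure Ω) ∧ ContDiffOn ℝ 2 v Ω ∧
      -- (iii) L[v] > 0 on Ω
      (∀ x ∈ Ω, 0 <
        (∑ i, ∑ j, a i j x * pd i (pd j v) x) + (∑ i, b i x * pd i v x) + c x * v x) ∧
      -- (iv) outward normal derivative on the outer sphere equals -m/f(ε) < 0
      (∀ x : EuclideanSpace ℝ (Fin n), ‖x‖ = R →
        fderivWithin ℝ v (closure Ω) x (R⁻¹ • x) = -m / f ε) ∧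
      -m / f ε < 0 := by
  have hε1 : ε < 1 := hε'.trans_le (min_le_left _ _)
  have hεR2 : ε < R / 2 := hε'.trans_le (min_le_right _ _)
  have hRε : 0 < R - ε := by linarith
  have hRεhalf : R / 2 < R - ε := by linarith
  have hn1 : (1:ℝ) ≤ (n:ℝ) := by exact_mod_cast hn
  have hkpos : 0 < k := by rw [hk]; positivity
  have hkI : k * (∫ s in Set.Ioc (0 : ℝ) ε, Λ s) ≤ 1 := by
    have := (lt_div_iff₀ hkpos).mp hΛsmall
    nlinarith
  -- f and ff agree on [0, ε]
  have hfeq : ∀ r, 0 ≤ r → r ≤ ε → f r = ff ε k Λ r := by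
    intro r h0 hrε
    rw [hf, ff]
    congr 1
    congr 1
    rw [intervalIntegral.integral_of_le h0]
    refine (setIntegral_congr_fun measurableSet_Ioc (fun s hs => ?_)).symm
    exact FF_eq hε hs.1.le (hs.2.trans hrε)
  have hffε : 0 < ff ε k Λ ε := lt_of_lt_of_le hε (ff_ge hΛpos hΛint hkpos hε.le)
  have hfε : 0 < f ε := by rw [hfeq ε hε.le le_rfl]; exact hffε
  set C := m / f ε with hCdef
  have hC : 0 < C := div_pos hm hfε
  set v : EuclideanSpace ℝ (Fin n) → ℝ := fun x => C * ff ε k Λ (R - ‖x‖) with hvdef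
  -- membership in Ω
  have hΩmem : ∀ x : EuclideanSpace ℝ (Fin n), x ∈ Ω ↔ (R - ε < ‖x‖ ∧ ‖x‖ < R) := by
    intro x
    rw [hΩ, Set.mem_diff, mem_ball_zero_iff, closure_ball _ (ne_of_gt hRε),
      mem_closedBall_zero_iff]
    constructor
    · rintro ⟨h1, h2⟩; exact ⟨lt_of_not_ge h2, h1⟩
    · rintro ⟨h1, h2⟩; exact ⟨h2, not_le.2 h1⟩
  have hclosure : closure Ω ⊆ {x : EuclideanSpace ℝ (Fin n) | R - ε ≤ ‖x‖ ∧ ‖x‖ ≤ R} := by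
    refine closure_minimal (fun x hx => ?_) ?_
    · obtain ⟨h1, h2⟩ := (hΩmem x).1 hx; exact ⟨h1.le, h2.le⟩
    · exact (isClosed_le continuous_const continuous_norm).inter
        (isClosed_le continuous_norm continuous_const)
  have hΩne : ∀ x : EuclideanSpace ℝ (Fin n), x ∈ closure Ω → x ≠ 0 := by
    intro x hx h0
    have := (hclosure hx).1
    rw [h0, norm_zero] at this
    linarith
  -- derivative of v at any nonzero point
  have hvD : ∀ y : EuclideanSpace ℝ (Fin n), y ≠ 0 →
      HasFDerivAt v ((-C * (1 + k * FF ε Λ (R - ‖y‖))) • (‖y‖⁻¹ • (innerSL ℝ y))) y := by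
    intro y hy
    have h2 : HasDerivAt (fun ρ : ℝ => R - ρ) (-1) ‖y‖ := (hasDerivAt_id _).const_sub R
    have h3 := (ff_hasDeriv (k := k) hΛint (R - ‖y‖)).comp ‖y‖ h2
    have h4 := h3.const_mul C
    have h1 : HasDerivAt (fun ρ : ℝ => C * ff ε k Λ (R - ρ))
        (-C * (1 + k * FF ε Λ (R - ‖y‖))) ‖y‖ := by
      refine h4.congr_deriv ?_
      ring
    exact h1.comp_hasFDerivAt y (myHasFDerivAt_norm hy)
  have hpdv : ∀ (j : Fin n) (y : EuclideanSpace ℝ (Fin n)), y ≠ 0 →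
      pd j v y = (-C * (1 + k * FF ε Λ (R - ‖y‖))) * (‖y‖⁻¹ * y j) := by
    intro j y hy
    show fderiv ℝ v y (EuclideanSpace.single j 1) = _
    rw [(hvD y hy).fderiv]
    simp [EuclideanSpace.inner_single_right]
  refine ⟨v, ?_, ?_, ?_, ?_, ?_, ?_, ?_, ?_, ?_⟩
  · -- range
    intro x hx
    obtain ⟨h1, h2⟩ := hclosure hx
    have hd0 : 0 ≤ R - ‖x‖ := by linarith
    have hdε : R - ‖x‖ ≤ ε := by linarith
    constructor
    · have : (0:ℝ) ≤ ff ε k Λ (R - ‖x‖) := by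
        have := ff_mono (k := k) hΛpos hΛint hkpos hd0
        rw [ff_zero] at this
        exact this
      positivity
    · have hle : ff ε k Λ (R - ‖x‖) ≤ ff ε k Λ ε := ff_mono hΛpos hΛint hkpos hdε
      have : v x ≤ C * ff ε k Λ ε := by
        simp only [hvdef]
        exact mul_le_mul_of_nonneg_left hle hC.le
      calc v x ≤ C * ff ε k Λ ε := this
      _ = m := by
          rw [hCdef, hfeq ε hε.le le_rfl]
          field_simp
  · -- outer boundary
    intro x hxR
    simp only [hvdef, hxR, sub_self, ff_zero, mul_zero]
  · -- inner boundary
    intro x hxRε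
    simp only [hvdef, hxRε]
    rw [show R - (R - ε) = ε by ring, hCdef, hfeq ε hε.le le_rfl]
    field_simp
  · -- positivity on Ω
    intro x hx
    obtain ⟨h1, h2⟩ := (hΩmem x).1 hx
    have hd0 : 0 < R - ‖x‖ := by linarith
    have := ff_ge (k := k) hΛpos hΛint hkpos hd0.le
    have : 0 < ff ε k Λ (R - ‖x‖) := lt_of_lt_of_le hd0 this
    simp only [hvdef]
    positivity
  · -- C¹ on closure Ω
    refine ContDiffOn.mono (s := {x : EuclideanSpace ℝ (Fin n) | x ≠ 0}) ?_ hΩne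
    intro x hx
    have h1 : ContDiffAt ℝ 1 (fun y : EuclideanSpace ℝ (Fin n) => R - ‖y‖) x :=
      contDiffAt_const.sub (contDiffAt_norm ℝ hx)
    have h2 := ((ff_contDiff_one (k := k) hΛint).contDiffAt).comp x h1
    exact (contDiffAt_const.mul h2).contDiffWithinAt
  · -- C² on Ω
    have hmaps : ∀ x ∈ Ω, (R - ‖x‖) ∈ Set.Ioo (0:ℝ) ε := by
      intro x hx
      obtain ⟨h1, h2⟩ := (hΩmem x).1 hx
      exact ⟨by linarith, by linarith⟩
    have h0 : ContDiffOn ℝ 2 (fun y : EuclideanSpace ℝ (Fin n) => R - ‖y‖) Ω := by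
      intro x hx
      have hx0 : x ≠ 0 := by
        intro h0
        have := (hΩmem x).1 hx
        rw [h0, norm_zero] at this
        linarith [this.1]
      exact (contDiffAt_const.sub (contDiffAt_norm ℝ hx0)).contDiffWithinAt
    have h1 := (ff_contDiffOn_two hε hΛcont hΛint (k := k)).comp h0 hmaps
    exact contDiffOn_const.mul h1
  · -- L[v] > 0 on Ω
    intro x hx
    obtain ⟨hr1, hr2⟩ := (hΩmem x).1 hx
    have hrpos : 0 < ‖x‖ := lt_trans hRε hr1
    have hx0 : x ≠ 0 := norm_pos_iff.1 hrpos
    have hrhalf : R / 2 < ‖x‖ := lt_trans hRεhalf hr1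
    have hd1 : 0 < R - ‖x‖ := by linarith
    have hd2 : R - ‖x‖ < ε := by linarith
    have hΛd : 0 < Λ (R - ‖x‖) := hΛpos _ ⟨hd1, hd2.le⟩
    have hFFd0 : 0 ≤ FF ε Λ (R - ‖x‖) := FF_nonneg hΛpos hΛint _
    have hkFFd : k * FF ε Λ (R - ‖x‖) ≤ 1 :=
      le_trans (mul_le_mul_of_nonneg_left (FF_le hε hΛpos hΛint _) hkpos.le) hkI
    obtain ⟨N0, hN0⟩ : ∃ N0 : ℝ, N0 = C * (1 + k * FF ε Λ (R - ‖x‖)) := ⟨_, rfl⟩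
    have h1kFF : 0 < 1 + k * FF ε Λ (R - ‖x‖) := by
      nlinarith [mul_nonneg hkpos.le hFFd0]
    have hN0pos : 0 < N0 := by rw [hN0]; exact mul_pos hC h1kFF
    have hN02 : N0 ≤ 2 * C := by
      rw [hN0]
      nlinarith [mul_nonneg hC.le (sub_nonneg.mpr hkFFd)]
    obtain ⟨P, hP⟩ : ∃ P : ℝ, P = -N0 / ‖x‖ := ⟨_, rfl⟩
    obtain ⟨Q, hQ⟩ : ∃ Q : ℝ, Q = (C * k * Λ (R - ‖x‖) * ‖x‖ + N0) / ‖x‖ ^ 2 := ⟨_, rfl⟩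
    have hQpos : 0 < Q := by
      rw [hQ]
      apply div_pos ?_ (by positivity)
      have := mul_pos (mul_pos (mul_pos hC hkpos) hΛd) hrpos
      linarith
    -- derivative machinery
    have h2 : HasDerivAt (fun ρ : ℝ => R - ρ) (-1) ‖x‖ := (hasDerivAt_id _).const_sub R
    have h3 := (FF_hasDeriv hε hΛcont hΛint
      (show R - ‖x‖ ∈ Set.Ioo 0 ε from ⟨hd1, hd2⟩)).comp ‖x‖ h2
    have h4 : HasDerivAt (fun ρ : ℝ => -C * (1 + k * FF ε Λ (R - ρ)))
        (-C * (k * (Λ (R - ‖x‖) * -1))) ‖x‖ := ((h3.const_mul k).const_add 1).const_mul (-C)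
    have h5 := h4.div (hasDerivAt_id ‖x‖) (ne_of_gt hrpos)
    have hψnorm := h5.comp_hasFDerivAt x (myHasFDerivAt_norm hx0)
    have hproj : ∀ j : Fin n, HasFDerivAt (fun y : EuclideanSpace ℝ (Fin n) => y j)
        (EuclideanSpace.proj j : EuclideanSpace ℝ (Fin n) →L[ℝ] ℝ) x := by
      intro j
      have := (EuclideanSpace.proj j : EuclideanSpace ℝ (Fin n) →L[ℝ] ℝ).hasFDerivAt (x := x)
      convert this using 1
      funext y; rfl
    have heq : ∀ j : Fin n, pd j v =ᶠ[nhds x]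
        (fun y : EuclideanSpace ℝ (Fin n) =>
          ((fun ρ : ℝ => -C * (1 + k * FF ε Λ (R - ρ)) / ρ) ∘ fun y => ‖y‖) y * y j) := by
      intro j
      filter_upwards [isOpen_compl_singleton.mem_nhds
        (by simpa using hx0 : x ∈ ({0} : Set (EuclideanSpace ℝ (Fin n)))ᶜ)] with y hy
      have hy0 : y ≠ 0 := by simpa using hy
      rw [hpdv j y hy0]
      show _ = (-C * (1 + k * FF ε Λ (R - ‖y‖)) / ‖y‖) * y j
      ring
    have hpd2 : ∀ i j : Fin n, pd i (pd j v) x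
        = P * (if j = i then 1 else 0) + Q * ‖x‖⁻¹ * x i * x j := by
      intro i j
      have hgj := hψnorm.mul (hproj j)
      have hD := (heq j).fderiv_eq.trans hgj.fderiv
      show fderiv ℝ (pd j v) x (EuclideanSpace.single i 1) = _
      rw [hD]
      rw [hP, hQ, hN0]
      by_cases hji : j = i <;>
        simp only [hji, ContinuousLinearMap.add_apply, ContinuousLinearMap.smul_apply,
          smul_eq_mul, innerSL_apply_apply, if_true, if_false, Function.comp] <;>
        simp [hji, EuclideanSpace.single_apply, EuclideanSpace.inner_single_right] <;>
        field_simp <;>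
        ring
    -- the sums
    have hsum : (∑ i, ∑ j, a i j x * pd i (pd j v) x)
        = P * (∑ i, a i i x) + (Q * ‖x‖⁻¹) * (∑ i, ∑ j, a i j x * x i * x j) := by
      calc (∑ i, ∑ j, a i j x * pd i (pd j v) x)
          = ∑ i, (P * a i i x + (Q * ‖x‖⁻¹) * (∑ j, a i j x * x i * x j)) := by
            refine Finset.sum_congr rfl fun i _ => ?_
            calc (∑ j, a i j x * pd i (pd j v) x)
                = ∑ j, ((if j = i then a i j x * P else 0)
                    + (Q * ‖x‖⁻¹) * (a i j x * x i * x j)) := by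
                  refine Finset.sum_congr rfl fun j _ => ?_
                  rw [hpd2 i j]
                  by_cases h : j = i <;> simp [h] <;> ring
              _ = P * a i i x + (Q * ‖x‖⁻¹) * (∑ j, a i j x * x i * x j) := by
                  rw [Finset.sum_add_distrib,
                    Finset.sum_ite_eq' Finset.univ i (fun j => a i j x * P), ← Finset.mul_sum]
                  simp [mul_comm]
        _ = P * (∑ i, a i i x) + (Q * ‖x‖⁻¹) * (∑ i, ∑ j, a i j x * x i * x j) := by
            rw [Finset.sum_add_distrib, ← Finset.mul_sum, ← Finset.mul_sum]
    -- ellipticity facts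
    have hA := hell x hx x
    have hdiag : ∀ p : Fin n, 1 ≤ a p p x ∧ a p p x ≤ Λ (R - ‖x‖) := by
      intro p
      have h := hell x hx (EuclideanSpace.single p 1)
      rw [EuclideanSpace.norm_single] at h
      simpa [EuclideanSpace.single_apply, mul_ite, ite_mul,
        Finset.sum_ite_eq, Finset.sum_ite_eq'] using h
    have htr0 : 0 ≤ ∑ i, a i i x :=
      Finset.sum_nonneg fun i _ => le_trans zero_le_one (hdiag i).1
    have htr2 : (∑ i, a i i x) ≤ (n:ℝ) * Λ (R - ‖x‖) := by
      calc (∑ i, a i i x) ≤ ∑ _i : Fin n, Λ (R - ‖x‖) :=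
            Finset.sum_le_sum (fun i _ => (hdiag i).2)
      _ = (n:ℝ) * Λ (R - ‖x‖) := by
          simp [Finset.sum_const, Finset.card_univ, nsmul_eq_mul]
    -- first-order term bound
    have hBi : ∀ i : Fin n, -(Λ (R - ‖x‖) * N0) ≤ b i x * pd i v x := by
      intro i
      have h2' : |pd i v x| ≤ N0 := by
        rw [hpdv i x hx0, hN0]
        calc |(-C * (1 + k * FF ε Λ (R - ‖x‖))) * (‖x‖⁻¹ * x i)|
            = (C * (1 + k * FF ε Λ (R - ‖x‖))) * (‖x‖⁻¹ * |x i|) := by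
              rw [abs_mul,
                abs_of_nonpos (by nlinarith [mul_pos hC h1kFF] :
                  -C * (1 + k * FF ε Λ (R - ‖x‖)) ≤ 0),
                abs_mul, abs_of_nonneg (inv_nonneg.mpr (norm_nonneg x))]
              ring
        _ ≤ (C * (1 + k * FF ε Λ (R - ‖x‖))) * (‖x‖⁻¹ * ‖x‖) := by
              refine mul_le_mul_of_nonneg_left
                (mul_le_mul_of_nonneg_left (abs_coord_le_norm x i)
                  (inv_nonneg.mpr (norm_nonneg x))) (mul_pos hC h1kFF).le
        _ = C * (1 + k * FF ε Λ (R - ‖x‖)) := by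
              rw [inv_mul_cancel₀ (ne_of_gt hrpos), mul_one]
      have h1 : |b i x * pd i v x| ≤ Λ (R - ‖x‖) * N0 := by
        rw [abs_mul]
        exact mul_le_mul (hb x hx i) h2' (abs_nonneg _) hΛd.le
      linarith [neg_abs_le (b i x * pd i v x), abs_nonneg (b i x * pd i v x)]
    have hB : -((n:ℝ) * (Λ (R - ‖x‖) * N0)) ≤ ∑ i, b i x * pd i v x := by
      have h := Finset.card_nsmul_le_sum Finset.univ
        (f := fun i => b i x * pd i v x) (-(Λ (R - ‖x‖) * N0)) (fun i _ => hBi i)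
      rw [Finset.card_univ, Fintype.card_fin, nsmul_eq_mul] at h
      calc -((n:ℝ) * (Λ (R - ‖x‖) * N0)) = (n:ℝ) * -(Λ (R - ‖x‖) * N0) := by ring
      _ ≤ ∑ i, b i x * pd i v x := h
    have hB2 : -(2 * C * (n:ℝ) * Λ (R - ‖x‖)) ≤ ∑ i, b i x * pd i v x := by
      have : (n:ℝ) * (Λ (R - ‖x‖) * N0) ≤ 2 * C * (n:ℝ) * Λ (R - ‖x‖) := by nlinarith
      linarith
    -- zeroth order bound
    have hvge : 0 ≤ v x := by
      have h := ff_mono (k := k) hΛpos hΛint hkpos hd1.le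
      rw [ff_zero] at h
      simp only [hvdef]
      positivity
    have hvle : v x ≤ C * (2 * (R - ‖x‖)) := by
      have h := ff_le_two hε hΛpos hΛint hkpos hΛsmall hd1.le
      simp only [hvdef]
      nlinarith
    have hcv : -(2 * C * Λ (R - ‖x‖)) ≤ c x * v x := by
      have h1 : -(Λ (R - ‖x‖) / (R - ‖x‖)) ≤ c x := by linarith [hc x hx]
      have h2' : (-(Λ (R - ‖x‖) / (R - ‖x‖))) * v x ≤ c x * v x :=
        mul_le_mul_of_nonneg_right h1 hvge
      have h4 : (Λ (R - ‖x‖) / (R - ‖x‖)) * v x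
          ≤ (Λ (R - ‖x‖) / (R - ‖x‖)) * (C * (2 * (R - ‖x‖))) :=
        mul_le_mul_of_nonneg_left hvle (by positivity)
      have h5' : (Λ (R - ‖x‖) / (R - ‖x‖)) * (C * (2 * (R - ‖x‖))) = 2 * C * Λ (R - ‖x‖) := by
        field_simp
      nlinarith
    -- second order bounds
    have hp1 : C * k * Λ (R - ‖x‖) ≤ (Q * ‖x‖⁻¹) * (∑ i, ∑ j, a i j x * x i * x j) := by
      have h1 : (Q * ‖x‖⁻¹) * ‖x‖ ^ 2 ≤ (Q * ‖x‖⁻¹) * (∑ i, ∑ j, a i j x * x i * x j) :=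
        mul_le_mul_of_nonneg_left hA.1 (by positivity)
      have hterm : (Q * ‖x‖⁻¹) * ‖x‖ ^ 2 = C * k * Λ (R - ‖x‖) + N0 / ‖x‖ := by
        rw [hQ]
        field_simp
      have h6 : 0 < N0 / ‖x‖ := div_pos hN0pos hrpos
      linarith
    have hxinv : ‖x‖⁻¹ ≤ 2 / R := by
      have h1 : 1 / ‖x‖ ≤ 1 / (R / 2) := one_div_le_one_div_of_le (half_pos hR) hrhalf.le
      rw [one_div, one_div_div] at h1
      simpa using h1
    have hp2 : -((4 * C * (n:ℝ) / R) * Λ (R - ‖x‖)) ≤ P * (∑ i, a i i x) := by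
      have hPeq : P = -(N0 * ‖x‖⁻¹) := by rw [hP]; field_simp
      have h1 : N0 * ‖x‖⁻¹ ≤ (2 * C) * (2 / R) :=
        mul_le_mul hN02 hxinv (by positivity) (by positivity)
      have h2' : (N0 * ‖x‖⁻¹) * (∑ i, a i i x) ≤ ((2 * C) * (2 / R)) * ((n:ℝ) * Λ (R - ‖x‖)) :=
        mul_le_mul h1 htr2 htr0 (by positivity)
      have h3' : ((2 * C) * (2 / R)) * ((n:ℝ) * Λ (R - ‖x‖))
          = (4 * C * (n:ℝ) / R) * Λ (R - ‖x‖) := by ring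
      rw [hPeq, neg_mul]
      linarith
    -- conclusion
    have hkid : C * k * Λ (R - ‖x‖) = (4 * C * (n:ℝ) / R) * Λ (R - ‖x‖)
        + 2 * C * (n:ℝ) * Λ (R - ‖x‖) + 3 * C * Λ (R - ‖x‖) := by
      rw [hk]
      field_simp
      ring
    have hCΛ : 0 < C * Λ (R - ‖x‖) := mul_pos hC hΛd
    rw [hsum]
    linarith [hp1, hp2, hB2, hcv, hkid, hCΛ]
  · -- normal derivative
    intro x hxR
    have hx0 : x ≠ 0 := by
      intro h0; rw [h0, norm_zero] at hxR; linarith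
    have hdiff : DifferentiableAt ℝ v x := (hvD x hx0).differentiableAt
    set ctr := ((R - ε/2)/R) • x with hctr
    have hnc : ‖ctr‖ = R - ε/2 := by
      rw [hctr, norm_smul, hxR, Real.norm_eq_abs,
        abs_of_pos (div_pos (by linarith) hR)]
      field_simp
    have hUD : UniqueDiffWithinAt ℝ (closure Ω) x := by
      have hsub : ball ctr (ε/2) ⊆ Ω := by
        intro y hy
        rw [mem_ball, dist_eq_norm] at hy
        have e1 : ‖y‖ ≤ ‖y - ctr‖ + ‖ctr‖ := by
          calc ‖y‖ = ‖y - ctr + ctr‖ := by rw [sub_add_cancel]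
          _ ≤ ‖y - ctr‖ + ‖ctr‖ := norm_add_le _ _
        have e2 : ‖ctr‖ - ‖y - ctr‖ ≤ ‖y‖ := by
          have e3 : ‖ctr‖ ≤ ‖ctr - y‖ + ‖y‖ := by
            calc ‖ctr‖ = ‖ctr - y + y‖ := by rw [sub_add_cancel]
            _ ≤ ‖ctr - y‖ + ‖y‖ := norm_add_le _ _
          rw [norm_sub_rev] at e3
          linarith
        refine (hΩmem y).2 ⟨by rw [hnc] at e2; linarith, by rw [hnc] at e1; linarith⟩
      have hxcls : x ∈ closure (ball ctr (ε/2)) := by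
        rw [closure_ball _ (ne_of_gt (half_pos hε)), mem_closedBall, dist_eq_norm]
        have hxc : x - ctr = (ε/(2*R)) • x := by
          rw [hctr, show x - ((R - ε/2)/R) • x = (1 - (R - ε/2)/R) • x from by
            rw [sub_smul, one_smul]]
          congr 1
          field_simp
          ring
        have hval : ε/(2*R) * R = ε / 2 := by field_simp
        rw [hxc, norm_smul, hxR, Real.norm_eq_abs, abs_of_pos (by positivity), hval]
      exact (uniqueDiffWithinAt_convex (convex_ball ctr (ε/2))
        (by rw [isOpen_ball.interior_eq]; exact nonempty_ball.2 (half_pos hε))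
        hxcls).mono (hsub.trans subset_closure)
    rw [hdiff.fderivWithin hUD, (hvD x hx0).fderiv]
    simp only [ContinuousLinearMap.smul_apply, smul_eq_mul, innerSL_apply_apply]
    rw [hxR, sub_self, FF_zero, real_inner_smul_right, real_inner_self_eq_norm_sq, hxR]
    rw [hCdef]
    field_simp
    ring
  · -- negativity
    rw [neg_div]
    exact neg_neg_iff_pos.mpr (div_pos hm hfε)
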